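/- Influence weight is invariant to self-citations: let C be a positive quasi-symmetric matrix C = D S (D positive diagonal, S symmetric) with diagonal matrix of column sums A, normalized so the leading eigenvector of A⁻¹C equal to the diagonal d of D. If C' = C + T where T is any nonnegative diagonal matrix, then C' is also quasi-symmetric with the same diagonal factor up to the decomposition C' = D S' where S' = S + D⁻¹T is symmetric; hence d remains an eigenvector with eigenvalue 1 of A'⁻¹C' where A' = diag of column sums of C'. -/
import Mathlib


open Matrix

theorem influence_weight_self_citation_invariant {n : ℕ}
    (d : Fin n → ℝ) (S C : Matrix (Fin n) (Fin n) ℝ)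
    (hd : ∀ i, 0 < d i) (hS : S.IsSymm) (hSpos : ∀ i j, 0 < S i j)
    (hC : C = Matrix.diagonal d * S)
    (t : Fin n → ℝ) (ht : ∀ i, 0 ≤ t i) :
    let C' : Matrix (Fin n) (Fin n) ℝ := C + Matrix.diagonal t
    let S' : Matrix (Fin n) (Fin n) ℝ := S + Matrix.diagonal (fun i => t i / d i)
    let A' : Matrix (Fin n) (Fin n) ℝ := Matrix.diagonal (fun j => ∑ i, C' i j)
    S'.IsSymm ∧ C' = Matrix.diagonal d * S' ∧ (A'⁻¹ * C').mulVec d = d := by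
  intro C' S' A'
  have hdne : ∀ i, d i ≠ 0 := fun i => (hd i).ne'
  have hCeq : C' = Matrix.diagonal d * S' := by
    show C + Matrix.diagonal t = Matrix.diagonal d * (S + Matrix.diagonal fun i => t i / d i)
    have h1 : (fun i => d i * (t i / d i)) = t := funext fun i => by rw [mul_comm]; exact div_mul_cancel₀ _ (hdne i)
    rw [Matrix.mul_add, ← hC, Matrix.diagonal_mul_diagonal, h1]
  have hS'symm : S'.IsSymm := by
    show (S + Matrix.diagonal fun i => t i / d i).IsSymm
    rw [Matrix.IsSymm, Matrix.transpose_add, Matrix.diagonal_transpose, hS]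
  refine ⟨hS'symm, hCeq, ?_⟩
  -- entries of S' are positive
  have hS'pos : ∀ i j, 0 < S' i j := by
    intro i j
    show 0 < (S + Matrix.diagonal fun i => t i / d i) i j
    have : (0:ℝ) ≤ Matrix.diagonal (fun i => t i / d i) i j := by
      rcases eq_or_ne i j with h | h
      · subst h; simp [Matrix.diagonal_apply_eq]
        exact div_nonneg (ht i) (hd i).le
      · simp [Matrix.diagonal_apply_ne _ h]
    simpa using add_pos_of_pos_of_nonneg (hSpos i j) this
  have hC'eq : ∀ i j, C' i j = d i * S' i j := by
    intro i j
    rw [hCeq]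
    simp [Matrix.mul_apply, Matrix.diagonal_apply, Finset.sum_ite_eq]
  have hcolpos : ∀ j, 0 < ∑ i, C' i j := by
    intro j
    apply Finset.sum_pos
    · intro i _
      rw [hC'eq]
      exact mul_pos (hd i) (hS'pos i j)
    · exact ⟨j, Finset.mem_univ j⟩
  have hAinv : A'⁻¹ = Matrix.diagonal fun j => (∑ i, C' i j)⁻¹ := by
    apply Matrix.inv_eq_right_inv
    show (Matrix.diagonal fun j => ∑ i, C' i j) * _ = 1
    rw [Matrix.diagonal_mul_diagonal,
      show (fun j => (∑ i, C' i j) * (∑ i, C' i j)⁻¹) = fun _ => (1:ℝ)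
        from funext fun j => mul_inv_cancel₀ (hcolpos j).ne', Matrix.diagonal_one]
  funext j
  rw [hAinv]
  have hsymm : ∀ i k, S' i k = S' k i := fun i k => (Matrix.IsSymm.apply hS'symm k i)
  have : ((Matrix.diagonal fun j => (∑ i, C' i j)⁻¹) * C').mulVec d j
      = (∑ i, C' i j)⁻¹ * ∑ k, C' j k * d k := by
    simp [Matrix.mulVec, Matrix.mul_apply, Matrix.diagonal_apply, Finset.sum_ite_eq,
      dotProduct, Finset.mul_sum, mul_assoc]
  rw [this]
  have key : ∑ k, C' j k * d k = (∑ i, C' i j) * d j := by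
    rw [Finset.sum_mul]
    apply Finset.sum_congr rfl
    intro k _
    rw [hC'eq, hC'eq, hsymm j k]
    ring
  rw [key, inv_mul_cancel_left₀ (hcolpos j).ne']
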